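/- Let h be a history and MM = (po-mm, rf-mm) a memory model with po-mm ⊆ po and rf-mm ⊆ rf. Then h is MM-valid (there exists a store order ww such that G_loc^ww = (O, po-loc ∪ rf ∪ ww ∪ fr) and G_mm^ww = (O, po-mm ∪ rf-mm ∪ ww ∪ fr) are acyclic, where fr = rf⁻¹ ∘ ww) if and only if h is MM-consistent (there exists a strict total order tw on the writes WR such that G_loc = (O, po-loc ∪ rf ∪ tw ∪ cf) and G_mm = (O, po-mm ∪ rf-mm ∪ tw ∪ cf) are acyclic, where cf = rf⁻¹ ∘ ⋃_{x} tw_x). -/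

import Mathlib

/-- A relation (graph) is acyclic if its transitive closure is irreflexive. -/
def Acyc {α : Type*} (R : Set (α × α)) : Prop :=
  ∀ a, ¬ Relation.TransGen (fun x y => (x, y) ∈ R) a a

/-- `t` is a strict total order on the set `S`. -/
def StrictTotalOn {α : Type*} (S : Set α) (t : Set (α × α)) : Prop :=
  (∀ p ∈ t, p.1 ∈ S ∧ p.2 ∈ S) ∧
  (∀ a, (a, a) ∉ t) ∧
  (∀ a b c, (a, b) ∈ t → (b, c) ∈ t → (a, c) ∈ t) ∧
  (∀ a ∈ S, ∀ b ∈ S, a ≠ b → (a, b) ∈ t ∨ (b, a) ∈ t)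

/-- Composition `rf⁻¹ ∘ S`: `(r,w)` iff there is `w'` with `(w',r) ∈ rf` and `(w',w) ∈ S`. -/
def compRF {α : Type*} (rf S : Set (α × α)) : Set (α × α) :=
  {p | ∃ w', (w', p.1) ∈ rf ∧ (w', p.2) ∈ S}

/-- Restriction of a relation to pairs of events on variable `x`. -/
def restrVar {α X : Type*} (var : α → X) (S : Set (α × α)) (x : X) : Set (α × α) :=
  {p ∈ S | var p.1 = x ∧ var p.2 = x}

/-- Union over all variables of the restrictions: the same-variable part of `S`. -/
def sameVar {α X : Type*} (var : α → X) (S : Set (α × α)) : Set (α × α) :=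
  ⋃ x : X, restrVar var S x

/-- `po-loc`: restriction of `po` to events on the same variable. -/
def poloc {α X : Type*} (var : α → X) (po : Set (α × α)) : Set (α × α) :=
  {p ∈ po | var p.1 = var p.2}

/-- A store order: a union over variables of strict total orders on the writes to
that variable, with no edges between distinct variables. -/
def IsStoreOrder {α X : Type*} (var : α → X) (Wr : Set α) (ww : Set (α × α)) : Prop :=
  (∀ p ∈ ww, var p.1 = var p.2) ∧
  ∀ x : X, StrictTotalOn {w ∈ Wr | var w = x} (restrVar var ww x)

/-- `r[S]`: every write outside `S` (within `Wr`) precedes every write in `S`. -/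
def rSet {α : Type*} (Wr S : Set α) : Set (α × α) :=
  {p | p.1 ∈ Wr \ S ∧ p.2 ∈ S}

open Relation

lemma acyc_mono {α : Type*} {R S : Set (α × α)} (h : R ⊆ S) (hS : Acyc S) : Acyc R :=
  fun a hc => hS a (TransGen.mono (fun _ _ hxy => h hxy) a a hc)

lemma sameVar_eq {α X : Type*} (var : α → X) (S : Set (α × α)) :
    sameVar var S = {p ∈ S | var p.1 = var p.2} := by
  ext p
  simp only [sameVar, restrVar, Set.mem_iUnion, Set.mem_setOf_eq, Set.mem_sep_iff]
  constructor
  · rintro ⟨x, h, h1, h2⟩; exact ⟨h, h1.trans h2.symm⟩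
  · rintro ⟨h, h1⟩; exact ⟨var p.2, h, h1, rfl⟩

lemma transGen_sameVar {α X : Type*} {var : α → X} {G : Set (α × α)}
    (hG : ∀ p ∈ G, var p.1 = var p.2) {a b : α}
    (h : TransGen (fun x y => (x, y) ∈ G) a b) : var a = var b := by
  induction h with
  | single h => exact hG _ h
  | tail _ h ih => exact ih.trans (hG _ h)

/-- Collapse lemma: adding a strict order `tw` on `Wr` that contains the
write-to-write part of the transitive closure of an acyclic `G` keeps acyclicity. -/
lemma acyc_union_tw {α : Type*} {G tw : Set (α × α)} {Wr : Set α}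
    (hG : Acyc G)
    (htw_irr : ∀ a, (a, a) ∉ tw)
    (htw_trans : ∀ a b c, (a, b) ∈ tw → (b, c) ∈ tw → (a, c) ∈ tw)
    (htw_dom : ∀ p ∈ tw, p.1 ∈ Wr ∧ p.2 ∈ Wr)
    (hcomp : ∀ w w', w ∈ Wr → w' ∈ Wr →
      TransGen (fun x y => (x, y) ∈ G) w w' → (w, w') ∈ tw) :
    Acyc (G ∪ tw) := by
  have key : ∀ a b, TransGen (fun x y => (x, y) ∈ G ∪ tw) a b →
      TransGen (fun x y => (x, y) ∈ G) a b ∨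
      ∃ w w', ReflTransGen (fun x y => (x, y) ∈ G) a w ∧ (w, w') ∈ tw ∧
        ReflTransGen (fun x y => (x, y) ∈ G) w' b := by
    intro a b h
    induction h with
    | single h =>
      rcases h with h | h
      · exact Or.inl (TransGen.single h)
      · exact Or.inr ⟨_, _, ReflTransGen.refl, h, ReflTransGen.refl⟩
    | @tail b c _ hbc ih =>
      rcases hbc with hbc | hbc
      · rcases ih with ih | ⟨w, w', p1, ht, p2⟩
        · exact Or.inl (ih.tail hbc)
        · exact Or.inr ⟨w, w', p1, ht, p2.tail hbc⟩
      · rcases ih with ih | ⟨w, w', p1, ht, p2⟩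
        · exact Or.inr ⟨b, c, ih.to_reflTransGen, hbc, ReflTransGen.refl⟩
        · have hw' : w' ∈ Wr := (htw_dom _ ht).2
          have hb : b ∈ Wr := (htw_dom _ hbc).1
          rcases Relation.reflTransGen_iff_eq_or_transGen.mp p2 with rfl | htg
          · exact Or.inr ⟨w, c, p1, htw_trans _ _ _ ht hbc, ReflTransGen.refl⟩
          · have h2 : (w', b) ∈ tw := hcomp _ _ hw' hb htg
            exact Or.inr ⟨w, c, p1,
              htw_trans _ _ _ (htw_trans _ _ _ ht h2) hbc, ReflTransGen.refl⟩
  intro a hc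
  rcases key a a hc with h | ⟨w, w', p1, ht, p2⟩
  · exact hG a h
  · have hww : ReflTransGen (fun x y => (x, y) ∈ G) w' w := p2.trans p1
    rcases Relation.reflTransGen_iff_eq_or_transGen.mp hww with rfl | htg
    · exact htw_irr _ ht
    · have hw : w ∈ Wr := (htw_dom _ ht).1
      have hw' : w' ∈ Wr := (htw_dom _ ht).2
      exact htw_irr _ (htw_trans _ _ _ ht (hcomp _ _ hw' hw htg))

theorem validity_iff_consistency {α X : Type*} [Fintype α]
    (var : α → X) (Wr : Set α) (po rf pomm rfmm : Set (α × α))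
    (hpo_irr : ∀ a, (a, a) ∉ po)
    (hpo_trans : ∀ a b c, (a, b) ∈ po → (b, c) ∈ po → (a, c) ∈ po)
    (hrf : ∀ p ∈ rf, p.1 ∈ Wr ∧ p.2 ∉ Wr ∧ var p.1 = var p.2)
    (hrf_uniq : ∀ r ∉ Wr, ∃! w, (w, r) ∈ rf)
    (hpomm : pomm ⊆ po) (hrfmm : rfmm ⊆ rf) :
    (∃ ww : Set (α × α), IsStoreOrder var Wr ww ∧
        Acyc (poloc var po ∪ rf ∪ ww ∪ compRF rf ww) ∧
        Acyc (pomm ∪ rfmm ∪ ww ∪ compRF rf ww)) ↔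
    (∃ tw : Set (α × α), StrictTotalOn Wr tw ∧
        Acyc (poloc var po ∪ rf ∪ tw ∪ compRF rf (sameVar var tw)) ∧
        Acyc (pomm ∪ rfmm ∪ tw ∪ compRF rf (sameVar var tw))) := by
  constructor
  · -- validity → consistency
    rintro ⟨ww, ⟨hvars, hstrict⟩, hloc, hmm⟩
    set Gloc : Set (α × α) := poloc var po ∪ rf ∪ ww ∪ compRF rf ww with hGloc
    set Gmm : Set (α × α) := pomm ∪ rfmm ∪ ww ∪ compRF rf ww with hGmm
    -- basic facts about ww
    have hmemr : ∀ p ∈ ww, p ∈ restrVar var ww (var p.1) := by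
      intro p hp
      exact ⟨hp, rfl, (hvars p hp).symm⟩
    have hwwWr : ∀ p ∈ ww, p.1 ∈ Wr ∧ p.2 ∈ Wr := by
      intro p hp
      have h1 := ((hstrict (var p.1)).1 p (hmemr p hp)).1
      have h2 := ((hstrict (var p.1)).1 p (hmemr p hp)).2
      exact ⟨h1.1, h2.1⟩
    have hwwirr : ∀ a, (a, a) ∉ ww := by
      intro a ha
      exact (hstrict (var a)).2.1 a (hmemr (a, a) ha)
    have hwwtotal : ∀ a ∈ Wr, ∀ b ∈ Wr, var a = var b → a ≠ b →
        (a, b) ∈ ww ∨ (b, a) ∈ ww := by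
      intro a ha b hb hv hne
      have := (hstrict (var a)).2.2.2 a ⟨ha, rfl⟩ b ⟨hb, hv.symm⟩ hne
      rcases this with h | h
      · exact Or.inl h.1
      · exact Or.inr h.1
    have hww_mm : ww ⊆ Gmm := fun p hp => Or.inl (Or.inr hp)
    have hww_loc : ww ⊆ Gloc := fun p hp => Or.inl (Or.inr hp)
    -- the strict partial order to extend
    set q : α → α → Prop := fun a b =>
      TransGen (fun x y => (x, y) ∈ Gmm) a b ∧ a ∈ Wr ∧ b ∈ Wr with hq
    have hq_irr : ∀ a, ¬ q a a := fun a h => hmm a h.1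
    set r : α → α → Prop := fun a b => q a b ∨ a = b with hr
    haveI hpo' : IsPartialOrder α r := by
      refine { refl := fun a => Or.inr rfl, trans := ?_, antisymm := ?_ }
      · rintro a b c (hab | rfl) (hbc | rfl)
        · exact Or.inl ⟨hab.1.trans hbc.1, hab.2.1, hbc.2.2⟩
        · exact Or.inl hab
        · exact Or.inl hbc
        · exact Or.inr rfl
      · rintro a b (hab | rfl) (hba | h)
        · exact absurd ⟨hab.1.trans hba.1, hab.2.1, hab.2.1⟩ (hq_irr a)
        · exact h.symm
        · rfl
        · rfl
    obtain ⟨s, hlin, hrs⟩ := extend_partialOrder r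
    haveI := hlin
    set tw : Set (α × α) :=
      {p | s p.1 p.2 ∧ p.1 ≠ p.2 ∧ p.1 ∈ Wr ∧ p.2 ∈ Wr} with htwdef
    have htw_dom : ∀ p ∈ tw, p.1 ∈ Wr ∧ p.2 ∈ Wr := fun p hp => hp.2.2
    have htw_irr : ∀ a, (a, a) ∉ tw := fun a h => h.2.1 rfl
    have htw_trans : ∀ a b c, (a, b) ∈ tw → (b, c) ∈ tw → (a, c) ∈ tw := by
      intro a b c hab hbc
      refine ⟨trans_of s hab.1 hbc.1, ?_, hab.2.2.1, hbc.2.2.2⟩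
      intro h
      have h' : a = c := h
      subst h'
      exact hab.2.1 (antisymm_of s hab.1 hbc.1)
    have hq_tw : ∀ a b, q a b → (a, b) ∈ tw := by
      intro a b h
      refine ⟨hrs a b (Or.inl h), ?_, h.2.1, h.2.2⟩
      intro he
      have h' : a = b := he
      subst h'
      exact hq_irr a h
    have hww_tw : ww ⊆ tw := by
      intro p hp
      exact hq_tw p.1 p.2 ⟨TransGen.single (hww_mm hp), hwwWr p hp⟩
    have hcomp_mm : ∀ w w', w ∈ Wr → w' ∈ Wr →
        TransGen (fun x y => (x, y) ∈ Gmm) w w' → (w, w') ∈ tw :=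
      fun w w' hw hw' h => hq_tw w w' ⟨h, hw, hw'⟩
    -- same-variable part of tw is exactly ww
    have hsv : sameVar var tw = ww := by
      rw [sameVar_eq]
      ext p
      constructor
      · rintro ⟨hp, hv⟩
        rcases hwwtotal p.1 hp.2.2.1 p.2 hp.2.2.2 hv hp.2.1 with h | h
        · exact h
        · exact absurd (antisymm_of s hp.1 (hww_tw h).1) hp.2.1
      · intro hp
        exact ⟨hww_tw hp, hvars p hp⟩
    have hstot : StrictTotalOn Wr tw := by
      refine ⟨htw_dom, htw_irr, htw_trans, ?_⟩
      intro a ha b hb hne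
      rcases total_of s a b with h | h
      · exact Or.inl ⟨h, hne, ha, hb⟩
      · exact Or.inr ⟨h, hne.symm, hb, ha⟩
    refine ⟨tw, hstot, ?_, ?_⟩
    · -- G_loc with tw
      rw [hsv]
      have hlocvars : ∀ p ∈ Gloc, var p.1 = var p.2 := by
        rintro p (((hp | hp) | hp) | hp)
        · exact hp.2
        · exact (hrf p hp).2.2
        · exact hvars p hp
        · obtain ⟨w', h1, h2⟩ := hp
          exact ((hrf _ h1).2.2).symm.trans (hvars _ h2)
      have hcomp_loc : ∀ w w', w ∈ Wr → w' ∈ Wr →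
          TransGen (fun x y => (x, y) ∈ Gloc) w w' → (w, w') ∈ tw := by
        intro w w' hw hw' h
        have hv : var w = var w' := transGen_sameVar hlocvars h
        have hne : w ≠ w' := by rintro rfl; exact hloc w h
        rcases hwwtotal w hw w' hw' hv hne with hw2 | hw2
        · exact hww_tw hw2
        · exact absurd (h.tail (hww_loc hw2)) (hloc w)
      have hac : Acyc (Gloc ∪ tw) :=
        acyc_union_tw hloc htw_irr htw_trans htw_dom hcomp_loc
      refine acyc_mono ?_ hac
      rintro p (((hp | hp) | hp) | hp)
      · exact Or.inl (Or.inl (Or.inl (Or.inl hp)))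
      · exact Or.inl (Or.inl (Or.inl (Or.inr hp)))
      · exact Or.inr hp
      · exact Or.inl (Or.inr hp)
    · -- G_mm with tw
      rw [hsv]
      have hac : Acyc (Gmm ∪ tw) :=
        acyc_union_tw hmm htw_irr htw_trans htw_dom hcomp_mm
      refine acyc_mono ?_ hac
      rintro p (((hp | hp) | hp) | hp)
      · exact Or.inl (Or.inl (Or.inl (Or.inl hp)))
      · exact Or.inl (Or.inl (Or.inl (Or.inr hp)))
      · exact Or.inr hp
      · exact Or.inl (Or.inr hp)
  · -- consistency → validity
    rintro ⟨tw, ⟨hdom, hirr, htrans, htot⟩, hloc, hmm⟩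
    refine ⟨sameVar var tw, ⟨?_, ?_⟩, ?_, ?_⟩
    · rw [sameVar_eq]; exact fun p hp => hp.2
    · intro x
      have hresteq : restrVar var (sameVar var tw) x = restrVar var tw x := by
        rw [sameVar_eq]
        ext p
        constructor
        · rintro ⟨⟨hp, _⟩, h1, h2⟩; exact ⟨hp, h1, h2⟩
        · rintro ⟨hp, h1, h2⟩; exact ⟨⟨hp, h1.trans h2.symm⟩, h1, h2⟩
      rw [hresteq]
      refine ⟨?_, ?_, ?_, ?_⟩
      · rintro p ⟨hp, h1, h2⟩
        exact ⟨⟨(hdom p hp).1, h1⟩, ⟨(hdom p hp).2, h2⟩⟩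
      · rintro a ⟨ha, _⟩; exact hirr a ha
      · rintro a b c ⟨hab, h1, h2⟩ ⟨hbc, h3, h4⟩
        exact ⟨htrans a b c hab hbc, h1, h4⟩
      · rintro a ⟨ha, hax⟩ b ⟨hb, hbx⟩ hne
        rcases htot a ha b hb hne with h | h
        · exact Or.inl ⟨h, hax, hbx⟩
        · exact Or.inr ⟨h, hbx, hax⟩
    · refine acyc_mono ?_ hloc
      have hsub : sameVar var tw ⊆ tw := by rw [sameVar_eq]; exact fun p hp => hp.1
      rintro p (((hp | hp) | hp) | hp)
      · exact Or.inl (Or.inl (Or.inl hp))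
      · exact Or.inl (Or.inl (Or.inr hp))
      · exact Or.inl (Or.inr (hsub hp))
      · exact Or.inr hp
    · refine acyc_mono ?_ hmm
      have hsub : sameVar var tw ⊆ tw := by rw [sameVar_eq]; exact fun p hp => hp.1
      rintro p (((hp | hp) | hp) | hp)
      · exact Or.inl (Or.inl (Or.inl hp))
      · exact Or.inl (Or.inl (Or.inr hp))
      · exact Or.inl (Or.inr (hsub hp))
      · exact Or.inr hp
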